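/- Let (X, τ) be any topological space. Then the derivative topology τ⁺ is T₁: every singleton {x} ⊆ X is closed with respect to τ⁺. -/

import Mathlib

/-- The derivative topology `τ⁺` of a topology `t`: the topology generated by
the `t`-open sets together with all derived sets `d_t(A)`, `A ⊆ X`. -/
def derivTopology {X : Type*} (t : TopologicalSpace X) : TopologicalSpace X :=
  TopologicalSpace.generateFrom
    ({U : Set X | @IsOpen X t U} ∪ {S : Set X | ∃ A : Set X, S = @derivedSet X t A})

/-- For any topological space `(X, t)`, the derivative topology
`t⁺` is T₁: every singleton is `t⁺`-closed. -/
theorem derivTopology_t1 {X : Type*} (t : TopologicalSpace X) :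
    ∀ x : X, @IsClosed X (derivTopology t) {x} := by
  intro x
  rw [← @isOpen_compl_iff X _ (derivTopology t)]
  have hkey : ({x} : Set X)ᶜ =
      @derivedSet X t {x} ∪ (@closure X t {x})ᶜ := by
    ext y
    simp only [Set.mem_compl_iff, Set.mem_union, Set.mem_singleton_iff]
    constructor
    · intro hy
      by_cases hc : y ∈ @closure X t {x}
      · left
        rw [mem_derivedSet, accPt_principal_iff_clusterPt]
        have : ({x} : Set X) \ {y} = {x} := by
          exact Set.diff_singleton_eq_self (by simp [hy])
        rw [this, ← mem_closure_iff_clusterPt]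
        exact hc
      · right; exact hc
    · rintro (h | h) rfl
      · rw [mem_derivedSet, accPt_principal_iff_clusterPt] at h
        simp only [Set.diff_self, Filter.principal_empty] at h
        exact absurd (inf_bot_eq _) (Filter.neBot_iff.mp h)
      · exact h (@subset_closure X t {y} y rfl)
  rw [hkey]
  apply @IsOpen.union X _ _ (derivTopology t)
  · exact TopologicalSpace.GenerateOpen.basic _ (Or.inr ⟨{x}, rfl⟩)
  · exact TopologicalSpace.GenerateOpen.basic _
      (Or.inl ((@isOpen_compl_iff X _ t).mpr (@isClosed_closure X t {x})))
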